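/- For any compact Hausdorff space X and any infinite cardinal c = 2^ω (the continuum), t₀(X) = t₀(X^c): the functional tightness of X equals the functional tightness of the power X^𝔠. -/

import Mathlib

open Cardinal Set

section FunctionalTightnessAux

open Filter Topology

universe u

section Helpers

private lemma eqd {r s : ℝ} (h : ∀ δ : ℝ, 0 < δ → |r - s| < δ) : r = s := by
  by_contra hne
  exact lt_irrefl _ (h _ (abs_pos.mpr (sub_ne_zero.mpr hne)))

private lemma cnt_le {Y : Type u} {κ : Cardinal.{u}} (hκ : Cardinal.aleph0 ≤ κ)
    {S : Set Y} (hS : S.Countable) : #S ≤ κ :=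
  le_trans (Cardinal.mk_le_aleph0_iff.mpr (Set.countable_coe_iff.mpr hS)) hκ

private lemma res_point {Y : Type*} [TopologicalSpace Y] {f : Y → ℝ} {D : Set Y}
    (hD : Continuous (D.restrict f)) {y : Y} (hy : y ∈ D) {ε : ℝ} (hε : 0 < ε) :
    ∃ O : Set Y, IsOpen O ∧ y ∈ O ∧ ∀ w ∈ D, w ∈ O → |f w - f y| < ε := by
  have h1 : ContinuousAt (D.restrict f) ⟨y, hy⟩ := hD.continuousAt
  rw [ContinuousAt, Metric.tendsto_nhds] at h1
  have h2 := h1 ε hε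
  rw [nhds_subtype, Filter.eventually_comap] at h2
  rw [Filter.eventually_iff] at h2
  obtain ⟨O, hOsub, hOopen, hyO⟩ := mem_nhds_iff.mp h2
  refine ⟨O, hOopen, hyO, fun w hw hwO => ?_⟩
  have := hOsub hwO ⟨w, hw⟩ rfl
  rwa [Real.dist_eq] at this

private lemma seq_tendsto {Y : Type*} [TopologicalSpace Y] {f : Y → ℝ} {D : Set Y}
    (hD : Continuous (D.restrict f)) {u : ℕ → Y} {x : Y} (hu : ∀ n, u n ∈ D) (hx : x ∈ D)
    (h : Tendsto u atTop (𝓝 x)) : Tendsto (fun n => f (u n)) atTop (𝓝 (f x)) := by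
  have h2 : Tendsto (fun n => (⟨u n, hu n⟩ : D)) atTop (𝓝 ⟨x, hx⟩) := tendsto_subtype_rng.mpr h
  exact (hD.continuousAt.tendsto.comp h2)

private lemma kc_comp {W Y : Type u} [TopologicalSpace W] [TopologicalSpace Y]
    {κ : Cardinal.{u}} {f : Y → ℝ} (hf : ∀ A : Set Y, #A ≤ κ → Continuous (A.restrict f))
    {g : W → Y} (hg : Continuous g) :
    ∀ A : Set W, #A ≤ κ → Continuous (A.restrict (fun w => f (g w))) := by
  intro A hA
  have h1 : Continuous ((g '' A).restrict f) := hf _ (le_trans Cardinal.mk_image_le hA)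
  exact h1.comp (Continuous.subtype_mk (hg.comp continuous_subtype_val)
    (fun a => ⟨(a : W), a.2, rfl⟩))

private lemma nhd_abs {Z : Type*} [TopologicalSpace Z] {g : Z → ℝ} (hg : Continuous g) (b : Z)
    {δ : ℝ} (hδ : 0 < δ) : {v | |g v - g b| < δ} ∈ 𝓝 b := by
  have h1 := hg.continuousAt (x := b)
  rw [ContinuousAt, Metric.tendsto_nhds] at h1
  filter_upwards [h1 δ hδ] with v hv using by rwa [Real.dist_eq] at hv

private lemma cont_of_sep {Y : Type*} [TopologicalSpace Y] [TopologicalSpace.SeparableSpace Y]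
    {f : Y → ℝ} (hf : ∀ A : Set Y, A.Countable → Continuous (A.restrict f)) : Continuous f := by
  obtain ⟨D, hDc, hDd⟩ := TopologicalSpace.exists_countable_dense Y
  rw [continuous_iff_continuousAt]
  intro p
  by_contra hp
  rw [ContinuousAt, Metric.tendsto_nhds] at hp
  push_neg at hp
  obtain ⟨ε, hε, hfr⟩ := hp
  obtain ⟨O₁, hO₁o, hpO₁, hO₁⟩ := res_point (hf _ (hDc.insert p)) (Set.mem_insert p D)
    (show (0:ℝ) < ε/3 by linarith)
  obtain ⟨z, hzO₁, hzfar⟩ := Filter.frequently_iff.mp hfr (hO₁o.mem_nhds hpO₁)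
  rw [Real.dist_eq] at hzfar
  obtain ⟨O₂, hO₂o, hzO₂, hO₂⟩ := res_point (hf _ (hDc.insert z)) (Set.mem_insert z D)
    (show (0:ℝ) < ε/3 by linarith)
  obtain ⟨d, hdO, hdD⟩ := dense_iff_inter_open.mp hDd (O₁ ∩ O₂) ((hO₁o.inter hO₂o))
    ⟨z, hzO₁, hzO₂⟩
  have h1 := hO₁ d (Set.mem_insert_of_mem _ hdD) hdO.1
  have h2 := hO₂ d (Set.mem_insert_of_mem _ hdD) hdO.2
  have : |f z - f p| < ε := by
    calc |f z - f p| ≤ |f d - f z| + |f d - f p| := by rw [abs_sub_comm (f d)]; exact abs_sub_le _ _ _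
    _ < ε := by linarith
  linarith

end Helpers


private lemma sep_bool_cube {ι : Type u} (e : ι → (ℕ → Bool)) (he : Function.Injective e) :
    TopologicalSpace.SeparableSpace (ι → Bool) := by
  classical
  set pre : ι → ℕ → List Bool := fun i N => List.ofFn (fun k : Fin N => e i k) with hpre
  set d : Finset (List Bool) → (ι → Bool) :=
    fun T i => decide (∃ l ∈ T, pre i l.length = l) with hd
  refine ⟨⟨Set.range d, Set.countable_range d, ?_⟩⟩
  rw [dense_iff_inter_open]
  rintro U hU ⟨x, hx⟩
  obtain ⟨I, u, h1, h2⟩ := isOpen_pi_iff.mp hU x hx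
  have hsep : ∀ a b : ι, a ≠ b → ∃ k, e a k ≠ e b k := by
    intro a b hab
    exact Function.ne_iff.mp (fun h => hab (he h))
  set N : ℕ := I.sup (fun a => I.sup (fun b =>
    if h : a = b then 0 else Nat.find (hsep a b h) + 1)) with hN
  have hNsep : ∀ a ∈ I, ∀ b ∈ I, a ≠ b → pre a N ≠ pre b N := by
    intro a ha b hb hab heq
    have hk : Nat.find (hsep a b hab) + 1 ≤ N := by
      have hle1 : (if h : a = b then 0 else Nat.find (hsep a b h) + 1) ≤
          I.sup (fun b => if h : a = b then 0 else Nat.find (hsep a b h) + 1) :=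
        Finset.le_sup (f := fun b => if h : a = b then 0 else Nat.find (hsep a b h) + 1) hb
      rw [dif_neg hab] at hle1
      exact le_trans hle1 (Finset.le_sup (f := fun a => I.sup (fun b => if h : a = b then 0 else Nat.find (hsep a b h) + 1)) ha)
    have heq2 : (fun k : Fin N => e a k) = (fun k : Fin N => e b k) := List.ofFn_inj.mp heq
    have := congrFun heq2 ⟨Nat.find (hsep a b hab), by omega⟩
    exact Nat.find_spec (hsep a b hab) this
  set T : Finset (List Bool) := (I.filter fun a => x a = true).image (fun a => pre a N) with hT
  have dval : ∀ a ∈ I, d T a = x a := by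
    intro a ha
    cases hxa : x a with
    | false =>
      apply decide_eq_false
      rintro ⟨l, hlT, hl⟩
      obtain ⟨b, hbf, rfl⟩ := Finset.mem_image.mp hlT
      obtain ⟨hbI, hxb⟩ := Finset.mem_filter.mp hbf
      have hlen : (pre b N).length = N := List.length_ofFn
      rw [hlen] at hl
      rcases eq_or_ne a b with h | h
      · subst h; rw [hxa] at hxb; exact Bool.false_ne_true hxb
      · exact hNsep a ha b hbI h hl
    | true =>
      apply decide_eq_true
      refine ⟨pre a N, Finset.mem_image_of_mem _ (Finset.mem_filter.mpr ⟨ha, hxa⟩), ?_⟩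
      rw [List.length_ofFn]
  refine ⟨d T, h2 ?_, Set.mem_range_self T⟩
  intro a ha
  rw [dval a ha]
  exact (h1 a ha).2

private lemma two_factor {Y Z : Type*} [TopologicalSpace Y] [TopologicalSpace Z]
    [CompactSpace Y] [CompactSpace Z] {f : Y × Z → ℝ}
    (hcnt : ∀ S : Set (Y × Z), S.Countable → Continuous (S.restrict f))
    (hYc : ∀ z, Continuous fun y => f (y, z))
    (hZc : ∀ y, Continuous fun z => f (y, z)) : Continuous f := by
  classical
  rw [continuous_iff_continuousAt]
  rintro ⟨a, b⟩
  by_contra hp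
  rw [ContinuousAt, Metric.tendsto_nhds] at hp
  push_neg at hp
  obtain ⟨ε, hε, hfr⟩ := hp
  have hwit : ∀ W ∈ 𝓝 (a, b), ∃ w ∈ W, ε ≤ |f w - f (a, b)| := by
    intro W hW
    obtain ⟨w, hw1, hw2⟩ := Filter.frequently_iff.mp hfr hW
    rw [Real.dist_eq] at hw2
    exact ⟨w, hw1, hw2⟩
  -- recursive construction
  have hstep : ∀ (n : ℕ) (prev : List (Y × Z)), ∃ w : Y × Z,
      (ε ≤ |f w - f (a, b)|) ∧ |f (a, w.2) - f (a, b)| < 1 / (n + 1) ∧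
      ∀ q ∈ prev, |f (w.1, q.2) - f (a, q.2)| < 1 / (n + 1) := by
    intro n prev
    have hδ : (0:ℝ) < 1 / ((n:ℝ) + 1) := by positivity
    have hV : {v | |f (a, v) - f (a, b)| < 1 / ((n:ℝ) + 1)} ∈ 𝓝 b :=
      nhd_abs (hZc a) b hδ
    have hU : (⋂ q ∈ prev.toFinset, {y | |f (y, q.2) - f (a, q.2)| < 1 / ((n:ℝ) + 1)})
        ∈ 𝓝 a := by
      rw [Filter.biInter_finset_mem]
      intro q _
      exact nhd_abs (hYc q.2) a hδ
    obtain ⟨w, hwW, hwfar⟩ := hwit _ (prod_mem_nhds hU hV)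
    refine ⟨w, hwfar, hwW.2, fun q hq => ?_⟩
    have := Set.mem_iInter₂.mp hwW.1 q (List.mem_toFinset.mpr hq)
    exact this
  set seqL : ℕ → List (Y × Z) :=
    fun n => Nat.rec [] (fun k l => Classical.choose (hstep k l) :: l) n with hseqL
  set c : ℕ → Y × Z := fun n => Classical.choose (hstep n (seqL n)) with hcdef
  have hseq : ∀ n, seqL (n + 1) = c n :: seqL n := fun n => rfl
  have hmem : ∀ m n, m < n → c m ∈ seqL n := by
    intro m n h
    induction n with
    | zero => omega
    | succ k ih =>
      rw [hseq]
      rcases Nat.lt_succ_iff_lt_or_eq.mp h with h' | h'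
      · exact List.mem_cons_of_mem _ (ih h')
      · subst h'; exact List.mem_cons_self
  have hc : ∀ n : ℕ, (ε ≤ |f (c n) - f (a, b)|) ∧
      |f (a, (c n).2) - f (a, b)| < 1 / (n + 1) ∧
      ∀ q ∈ seqL n, |f ((c n).1, q.2) - f (a, q.2)| < 1 / (n + 1) :=
    fun n => Classical.choose_spec (hstep n (seqL n))
  -- cluster point
  obtain ⟨zs, hzs⟩ : ∃ x : Y × Z, MapClusterPt x atTop c := by
    obtain ⟨x, -, h⟩ := isCompact_univ.exists_mapClusterPt (f := atTop) (u := c)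
      (by rw [Filter.principal_univ]; exact le_top)
    exact ⟨x, h⟩
  obtain ⟨z1, z2⟩ := zs
  have hfreq : ∀ O ∈ 𝓝 (z1, z2), ∀ N : ℕ, ∃ n ≥ N, c n ∈ O := by
    intro O hO N
    exact frequently_atTop.mp (mapClusterPt_iff_frequently.mp hzs O hO) N
  set S : Set (Y × Z) := (Set.range fun mn : ℕ × ℕ => ((c mn.1).1, (c mn.2).2)) ∪
      ((Set.range fun n => (z1, (c n).2)) ∪ {(z1, z2)}) with hS
  have hScnt : S.Countable :=
    (Set.countable_range _).union ((Set.countable_range _).union (Set.countable_singleton _))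
  have hSr := hcnt S hScnt
  have hmemS1 : ∀ m n : ℕ, ((c m).1, (c n).2) ∈ S := fun m n => Or.inl ⟨(m, n), rfl⟩
  have hmemSc : ∀ n : ℕ, c n ∈ S := fun n => by
    have := hmemS1 n n
    rwa [Prod.mk.eta] at this
  have hmemS2 : ∀ n : ℕ, (z1, (c n).2) ∈ S := fun n => Or.inr (Or.inl ⟨n, rfl⟩)
  have hmemS3 : (z1, z2) ∈ S := Or.inr (Or.inr rfl)
  -- γa : f (z1, v n) = f (a, v n)
  have key : ∀ n : ℕ, f (z1, (c n).2) = f (a, (c n).2) := by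
    intro n
    apply eqd
    intro δ hδ
    obtain ⟨N0, hN0⟩ := exists_nat_one_div_lt (show (0:ℝ) < δ/2 by linarith)
    obtain ⟨O, hOo, hOm, hOp⟩ := res_point hSr (hmemS2 n) (show (0:ℝ) < δ/2 by linarith)
    have hUsec : {y | (y, (c n).2) ∈ O} ∈ 𝓝 z1 := by
      have hcont : Continuous fun y : Y => (y, (c n).2) := continuous_id.prodMk continuous_const
      exact hcont.continuousAt.preimage_mem_nhds (hOo.mem_nhds hOm)
    have hP : {y | (y, (c n).2) ∈ O} ×ˢ (Set.univ : Set Z) ∈ 𝓝 (z1, z2) :=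
      prod_mem_nhds hUsec Filter.univ_mem
    obtain ⟨m, hm, hmO⟩ := hfreq _ hP (max (n + 1) (N0 + 1))
    have hm1 : n < m := lt_of_lt_of_le (Nat.lt_succ_self n) (le_trans (le_max_left _ _) hm)
    have hm2 : N0 + 1 ≤ m := le_trans (le_max_right _ _) hm
    have h3 := (hc m).2.2 (c n) (hmem n m hm1)
    have h4 := hOp _ (hmemS1 m n) hmO.1
    have h5 : 1 / ((m:ℝ) + 1) < δ/2 := by
      have : 1 / ((m:ℝ) + 1) ≤ 1 / ((N0:ℝ) + 1) := by
        apply one_div_le_one_div_of_le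
        · positivity
        · have : (N0:ℝ) + 1 ≤ m := by exact_mod_cast hm2
          linarith
      linarith
    calc |f (z1, (c n).2) - f (a, (c n).2)|
        ≤ |f ((c m).1, (c n).2) - f (z1, (c n).2)| + |f ((c m).1, (c n).2) - f (a, (c n).2)| := by
          rw [abs_sub_comm (f ((c m).1, (c n).2))]; exact abs_sub_le _ _ _
      _ < δ/2 + δ/2 := by apply add_lt_add h4 (lt_trans h3 h5)
      _ = δ := by ring
  -- α : ε ≤ |f (z1,z2) - f (a,b)|
  have hα : ε ≤ |f (z1, z2) - f (a, b)| := by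
    apply le_of_forall_pos_le_add
    intro δ hδ
    obtain ⟨O, hOo, hOm, hOp⟩ := res_point hSr hmemS3 hδ
    obtain ⟨m, _, hmO⟩ := hfreq _ (hOo.mem_nhds hOm) 0
    have h4 := hOp _ (hmemSc m) hmO
    have h1 := (hc m).1
    calc ε ≤ |f (c m) - f (a, b)| := h1
      _ ≤ |f (c m) - f (z1, z2)| + |f (z1, z2) - f (a, b)| := by
          have := abs_sub_le (f (c m)) (f (z1, z2)) (f (a, b)); linarith
      _ ≤ |f (z1, z2) - f (a, b)| + δ := by linarith
  -- γb : f (z1,z2) = f (a,b)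
  have hγ : f (z1, z2) = f (a, b) := by
    apply eqd
    intro δ hδ
    obtain ⟨N0, hN0⟩ := exists_nat_one_div_lt (show (0:ℝ) < δ/2 by linarith)
    have hV2 : {v | |f (z1, v) - f (z1, z2)| < δ/2} ∈ 𝓝 z2 :=
      nhd_abs (hZc z1) z2 (by linarith)
    have hP : (Set.univ : Set Y) ×ˢ {v | |f (z1, v) - f (z1, z2)| < δ/2} ∈ 𝓝 (z1, z2) :=
      prod_mem_nhds Filter.univ_mem hV2
    obtain ⟨n, hn, hnO⟩ := hfreq _ hP (N0 + 1)
    have h2 := hnO.2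
    have h3 := (hc n).2.1
    have h5 : 1 / ((n:ℝ) + 1) < δ/2 := by
      have : 1 / ((n:ℝ) + 1) ≤ 1 / ((N0:ℝ) + 1) := by
        apply one_div_le_one_div_of_le
        · positivity
        · have : (N0:ℝ) + 1 ≤ n := by exact_mod_cast hn
          linarith
      linarith
    have hkey := key n
    calc |f (z1, z2) - f (a, b)|
        ≤ |f (z1, (c n).2) - f (z1, z2)| + |f (z1, (c n).2) - f (a, b)| := by
          rw [abs_sub_comm (f (z1, (c n).2))]; exact abs_sub_le _ _ _
      _ < δ/2 + δ/2 := by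
          apply add_lt_add h2
          rw [hkey]
          calc |f (a, (c n).2) - f (a, b)| < 1 / (n + 1) := h3
            _ < δ/2 := h5
      _ = δ := by ring
  rw [hγ, sub_self, abs_zero] at hα
  linarith

private lemma fin_pow {X : Type u} [TopologicalSpace X] [CompactSpace X]
    {κ : Cardinal.{u}} (hκ : Cardinal.aleph0 ≤ κ)
    (hX : ∀ f : X → ℝ, (∀ A : Set X, #A ≤ κ → Continuous (A.restrict f)) → Continuous f) :
    ∀ (n : ℕ) (f : (Fin n → X) → ℝ),
      (∀ A : Set (Fin n → X), #A ≤ κ → Continuous (A.restrict f)) → Continuous f := by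
  intro n
  induction n with
  | zero =>
    intro f _
    have hconst : f = fun _ => f (fun i => i.elim0) :=
      funext fun g => congrArg f (funext fun i => i.elim0)
    rw [hconst]
    exact continuous_const
  | succ k ih =>
    intro f hf
    set e : (X × (Fin k → X)) → (Fin (k + 1) → X) := fun w => Fin.cons w.1 w.2 with he
    have hecont : Continuous e := by
      apply continuous_pi
      intro i
      refine Fin.cases ?_ ?_ i
      · simpa [he] using continuous_fst
      · intro j
        simp only [he, Fin.cons_succ]; exact (continuous_apply j).comp continuous_snd
    have hfe := kc_comp hf hecont
    have h2 : Continuous fun w : X × (Fin k → X) => f (e w) := by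
      apply two_factor (f := fun w : X × (Fin k → X) => f (e w))
      · intro S hS
        exact hfe S (cnt_le hκ hS)
      · intro z
        apply hX
        exact kc_comp hfe (continuous_id.prodMk continuous_const)
      · intro y
        apply ih
        exact kc_comp hfe (continuous_const.prodMk continuous_id)
    have hsplit : Continuous fun g : Fin (k + 1) → X => (g 0, fun j : Fin k => g j.succ) :=
      (continuous_apply 0).prodMk (continuous_pi fun j => continuous_apply _)
    have hfeq : f = fun g : Fin (k + 1) → X => f (e (g 0, fun j => g j.succ)) := by
      funext g
      exact (congrArg f (Fin.cons_self_tail g)).symm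
    rw [hfeq]
    exact h2.comp hsplit

private lemma main_power {X : Type u} [TopologicalSpace X] [CompactSpace X] [T2Space X]
    {ι : Type u} (e : ι → (ℕ → Bool)) (he : Function.Injective e)
    {κ : Cardinal.{u}} (hκ : Cardinal.aleph0 ≤ κ)
    (hX : ∀ f : X → ℝ, (∀ A : Set X, #A ≤ κ → Continuous (A.restrict f)) → Continuous f)
    (f : (ι → X) → ℝ) (hf : ∀ A : Set (ι → X), #A ≤ κ → Continuous (A.restrict f)) :
    Continuous f := by
  classical
  have hsep := sep_bool_cube e he
  rw [continuous_iff_continuousAt]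
  intro p
  by_contra hp
  rw [ContinuousAt, Metric.tendsto_nhds] at hp
  push_neg at hp
  obtain ⟨ε, hε, hfr⟩ := hp
  have hdisc : ∀ W ∈ 𝓝 p, ∃ z ∈ W, ε ≤ |f z - f p| := by
    intro W hW
    obtain ⟨z, hz1, hz2⟩ := Filter.frequently_iff.mp hfr hW
    rw [Real.dist_eq] at hz2
    exact ⟨z, hz1, hz2⟩
  -- hybrids
  set hyb : Finset ι → (ι → X) → (ι → X) := fun E z i => if i ∈ E then z i else p i with hhyb
  set Ψ : (ι → X) → (ι → Bool) → (ι → X) := fun z A i => cond (A i) (z i) (p i) with hΨ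
  have hybp : ∀ E : Finset ι, hyb E p = p := by
    intro E; funext i; by_cases h : i ∈ E <;> simp [hhyb, h]
  have hybΨ : ∀ (E : Finset ι) (z : ι → X), Ψ z (fun i => decide (i ∈ E)) = hyb E z := by
    intro E z; funext i
    by_cases h : i ∈ E
    · simp [hΨ, hhyb, h]
    · simp [hΨ, hhyb, h]
  have hybhyb : ∀ (E F : Finset ι) (z : ι → X), E ⊆ F → hyb E (hyb F z) = hyb E z := by
    intro E F z hEF; funext i
    by_cases h : i ∈ E
    · simp [hhyb, h, hEF h]
    · simp [hhyb, h]
  -- continuity of finite hybrids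
  have hge : ∀ E : Finset ι, Continuous fun w => f (hyb E w) := by
    intro E
    set m := E.equivFin with hm
    set ρ : (Fin E.card → X) → (ι → X) :=
      fun t i => if h : i ∈ E then t (m ⟨i, h⟩) else p i with hρ
    have hρc : Continuous ρ := by
      apply continuous_pi
      intro i
      by_cases h : i ∈ E
      · simp only [hρ, dif_pos h]; exact continuous_apply _
      · simp only [hρ, dif_neg h]; exact continuous_const
    set θ : (ι → X) → (Fin E.card → X) := fun w j => w (m.symm j) with hθ
    have hθc : Continuous θ := continuous_pi fun j => continuous_apply _
    have hcomp : ∀ w, ρ (θ w) = hyb E w := by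
      intro w; funext i
      by_cases h : i ∈ E
      · simp only [hρ, hθ, hhyb, dif_pos h, if_pos h, Equiv.symm_apply_apply]
      · simp only [hρ, hθ, hhyb, dif_neg h, if_neg h]
    have hFc : Continuous fun t => f (ρ t) := fin_pow hκ hX E.card _ (kc_comp hf hρc)
    have : (fun w => f (hyb E w)) = (fun t => f (ρ t)) ∘ θ := by
      funext w; exact (congrArg f (hcomp w)).symm
    rw [this]
    exact hFc.comp hθc
  -- threshold finite sets from separability of the Bool cube
  have hthr : ∀ (z : ι → X) (δ : ℝ), 0 < δ →
      ∃ Fz : Finset ι, ∀ E : Finset ι, Fz ⊆ E → |f (hyb E z) - f z| < δ := by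
    intro z δ hδ
    have hΨc : Continuous (Ψ z) := by
      apply continuous_pi
      intro i
      exact (continuous_of_discreteTopology (f := fun b : Bool => cond b (z i) (p i))).comp
        (continuous_apply i)
    have hG : Continuous fun A : ι → Bool => f (Ψ z A) :=
      cont_of_sep (fun A hA => kc_comp hf hΨc A (cnt_le hκ hA))
    have hGtop := hG.continuousAt (x := fun _ => true)
    rw [ContinuousAt, Metric.tendsto_nhds] at hGtop
    have h2 := hGtop δ hδ
    rw [Filter.eventually_iff, nhds_pi] at h2
    obtain ⟨I, hIfin, t, ht, hsub⟩ := Filter.mem_pi.mp h2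
    refine ⟨hIfin.toFinset, fun E hE => ?_⟩
    have hA : (fun i => decide (i ∈ E)) ∈ Set.pi I t := by
      intro i hi
      have hiE : i ∈ E := hE (hIfin.mem_toFinset.mpr hi)
      show decide (i ∈ E) ∈ t i
      rw [decide_eq_true hiE]
      exact mem_of_mem_nhds (ht i)
    have := hsub hA
    simp only [Set.mem_setOf_eq] at this
    rw [hybΨ E z] at this
    have hψtop : Ψ z (fun _ => true) = z := rfl
    rw [hψtop, Real.dist_eq] at this
    exact this
  have hfold : ∀ (l : List ((ι → X) × Finset ι)), ∀ q ∈ l,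
      q.2 ⊆ l.foldr (fun q acc => q.2 ∪ acc) ∅ := by
    intro l
    induction l with
    | nil => intro q hq; cases hq
    | cons head tail ih =>
      intro q hq
      rcases List.mem_cons.mp hq with h | h
      · subst h; exact Finset.subset_union_left
      · exact (ih q h).trans Finset.subset_union_right
  -- recursive construction
  have hstep : ∀ (n : ℕ) (prev : List ((ι → X) × Finset ι)), ∃ w : (ι → X) × Finset ι,
      (ε ≤ |f w.1 - f p|) ∧ (|f (hyb w.2 w.1) - f w.1| < 1 / (n + 1)) ∧
      (∀ q ∈ prev, q.2 ⊆ w.2) ∧ (∀ q ∈ prev, |f (hyb q.2 w.1) - f p| < 1 / (n + 1)) := by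
    intro n prev
    have hδ : (0:ℝ) < 1 / ((n:ℝ) + 1) := by positivity
    have hW : (⋂ q ∈ prev.toFinset, {w | |f (hyb q.2 w) - f p| < 1 / ((n:ℝ) + 1)}) ∈ 𝓝 p := by
      rw [Filter.biInter_finset_mem]
      intro q _
      have := nhd_abs (hge q.2) p hδ
      rwa [hybp q.2] at this
    obtain ⟨z, hzW, hzfar⟩ := hdisc _ hW
    obtain ⟨Fz, hFz⟩ := hthr z (1 / ((n:ℝ) + 1)) hδ
    refine ⟨(z, Fz ∪ prev.foldr (fun q acc => q.2 ∪ acc) ∅), hzfar,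
      hFz _ Finset.subset_union_left, ?_, ?_⟩
    · intro q hq
      exact (hfold prev q hq).trans Finset.subset_union_right
    · intro q hq
      exact Set.mem_iInter₂.mp hzW q (List.mem_toFinset.mpr hq)
  set seqL : ℕ → List ((ι → X) × Finset ι) :=
    fun n => Nat.rec [] (fun k l => Classical.choose (hstep k l) :: l) n with hseqL
  set c : ℕ → (ι → X) × Finset ι := fun n => Classical.choose (hstep n (seqL n)) with hcdef
  have hseq : ∀ n, seqL (n + 1) = c n :: seqL n := fun n => rfl
  have hmem : ∀ m n, m < n → c m ∈ seqL n := by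
    intro m n h
    induction n with
    | zero => omega
    | succ k ih =>
      rw [hseq]
      rcases Nat.lt_succ_iff_lt_or_eq.mp h with h' | h'
      · exact List.mem_cons_of_mem _ (ih h')
      · subst h'; exact List.mem_cons_self
  have hc : ∀ n : ℕ, (ε ≤ |f (c n).1 - f p|) ∧
      (|f (hyb (c n).2 (c n).1) - f (c n).1| < 1 / (n + 1)) ∧
      (∀ q ∈ seqL n, q.2 ⊆ (c n).2) ∧
      (∀ q ∈ seqL n, |f (hyb q.2 (c n).1) - f p| < 1 / (n + 1)) :=
    fun n => Classical.choose_spec (hstep n (seqL n))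
  set z : ℕ → (ι → X) := fun n => (c n).1 with hzdef
  set E : ℕ → Finset ι := fun n => (c n).2 with hEdef
  have hEmono : ∀ m n : ℕ, m ≤ n → E m ⊆ E n := by
    intro m n h
    rcases Nat.lt_or_ge m n with h' | h'
    · exact (hc n).2.2.1 (c m) (hmem m n h')
    · have heq : m = n := le_antisymm h h'
      subst heq
      exact Finset.Subset.refl _
  set y : ℕ → (ι → X) := fun n => hyb (E n) (z n) with hydef
  have hf2 : ∀ n : ℕ, |f (y n) - f (z n)| < 1 / (n + 1) := fun n => (hc n).2.1
  have hf4 : ∀ m n, m < n → |f (hyb (E m) (z n)) - f p| < 1 / (n + 1) :=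
    fun m n h => (hc n).2.2.2 (c m) (hmem m n h)
  have hf5 : ∀ m n, m < n → hyb (E m) (y n) = hyb (E m) (z n) :=
    fun m n h => hybhyb _ _ _ ((hc n).2.2.1 (c m) (hmem m n h))
  set J : Set ι := ⋃ n, ((E n : Finset ι) : Set ι) with hJdef
  have hyS : ∀ (n : ℕ) (i : ι), i ∉ J → y n i = p i := by
    intro n i hi
    have h1 : i ∉ E n := fun h => hi (Set.mem_iUnion.mpr ⟨n, h⟩)
    simp [hydef, hhyb, h1]
  obtain ⟨ys, hys⟩ : ∃ x : ι → X, MapClusterPt x atTop y := by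
    obtain ⟨x, -, h⟩ := isCompact_univ.exists_mapClusterPt (f := atTop) (u := y)
      (by rw [Filter.principal_univ]; exact le_top)
    exact ⟨x, h⟩
  have hfreq : ∀ O ∈ 𝓝 ys, ∀ N : ℕ, ∃ n ≥ N, y n ∈ O := by
    intro O hO N
    exact frequently_atTop.mp (mapClusterPt_iff_frequently.mp hys O hO) N
  have hysS : ∀ i, i ∉ J → ys i = p i := by
    have h1 : ys ∈ closure (Set.range y) := by
      rw [mem_closure_iff_clusterPt]
      exact hys.clusterPt.mono (le_principal_iff.mpr Filter.range_mem_map)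
    have h2 : closure (Set.range y) ⊆ {w : ι → X | ∀ i, i ∉ J → w i = p i} := by
      apply closure_minimal
      · rintro _ ⟨n, rfl⟩ i hi
        exact hyS n i hi
      · have heq : {w : ι → X | ∀ i, i ∉ J → w i = p i}
            = ⋂ i, ⋂ (_ : i ∉ J), {w : ι → X | w i = p i} := by
          ext w; simp [Set.mem_iInter]
        rw [heq]
        exact isClosed_iInter fun i => isClosed_iInter fun _ =>
          isClosed_eq (continuous_apply i) continuous_const
    exact fun i hi => h2 h1 i hi
  set D : Set (ι → X) :=
    Set.range y ∪ (Set.range (fun n => hyb (E n) ys) ∪ {ys}) with hDdef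
  have hDcnt : D.Countable :=
    (Set.countable_range _).union ((Set.countable_range _).union (Set.countable_singleton _))
  have hDr := hf D (cnt_le hκ hDcnt)
  have hmemD1 : ∀ n, y n ∈ D := fun n => Or.inl ⟨n, rfl⟩
  have hmemD2 : ∀ n : ℕ, hyb (E n) ys ∈ D := fun n => Or.inr (Or.inl ⟨n, rfl⟩)
  have hmemD3 : ys ∈ D := Or.inr (Or.inr rfl)
  have htnd : Tendsto (fun n => hyb (E n) ys) atTop (𝓝 ys) := by
    rw [tendsto_pi_nhds]
    intro i
    by_cases hiJ : i ∈ J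
    · obtain ⟨N, hN⟩ := Set.mem_iUnion.mp hiJ
      apply tendsto_atTop_of_eventually_const (i₀ := N)
      intro n hn
      have h1 : i ∈ E n := hEmono N n hn (Finset.mem_coe.mp hN)
      simp [hhyb, h1]
    · apply tendsto_atTop_of_eventually_const (i₀ := 0)
      intro n _
      have h1 : i ∉ E n := fun h => hiJ (Set.mem_iUnion.mpr ⟨n, h⟩)
      simp [hhyb, h1, hysS i hiJ]
  have hβ := seq_tendsto hDr hmemD2 hmemD3 htnd
  have honediv : ∀ (N0 n : ℕ) (δ : ℝ), 1 / ((N0:ℝ) + 1) < δ → N0 + 1 ≤ n →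
      1 / ((n:ℝ) + 1) < δ := by
    intro N0 n δ h1 h2
    have h3 : 1 / ((n:ℝ) + 1) ≤ 1 / ((N0:ℝ) + 1) := by
      apply one_div_le_one_div_of_le
      · positivity
      · have : (N0:ℝ) + 1 ≤ n := by exact_mod_cast h2
        linarith
    linarith
  have hγ : ∀ m : ℕ, f (hyb (E m) ys) = f p := by
    intro m
    apply eqd
    intro δ hδ
    obtain ⟨N0, hN0⟩ := exists_nat_one_div_lt (show (0:ℝ) < δ/2 by linarith)
    have hO : {w : ι → X | |f (hyb (E m) w) - f (hyb (E m) ys)| < δ/2} ∈ 𝓝 ys :=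
      nhd_abs (hge (E m)) ys (by linarith)
    obtain ⟨n, hn, hnO⟩ := hfreq _ hO (max (m + 1) (N0 + 1))
    have hm1 : m < n := lt_of_lt_of_le (Nat.lt_succ_self m) (le_trans (le_max_left _ _) hn)
    have hm2 : N0 + 1 ≤ n := le_trans (le_max_right _ _) hn
    have h4 : |f (hyb (E m) (y n)) - f (hyb (E m) ys)| < δ/2 := hnO
    rw [hf5 m n hm1] at h4
    have h3 := hf4 m n hm1
    have h5 := honediv N0 n (δ/2) hN0 hm2
    calc |f (hyb (E m) ys) - f p|
        ≤ |f (hyb (E m) (z n)) - f (hyb (E m) ys)| + |f (hyb (E m) (z n)) - f p| := by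
          rw [abs_sub_comm (f (hyb (E m) (z n)))]; exact abs_sub_le _ _ _
      _ < δ/2 + δ/2 := add_lt_add h4 (lt_trans h3 h5)
      _ = δ := by ring
  have hfys : f ys = f p := by
    apply tendsto_nhds_unique hβ
    have heq : (fun n => f (hyb (E n) ys)) = fun _ => f p := funext hγ
    rw [heq]
    exact tendsto_const_nhds
  have hα : ε ≤ |f ys - f p| := by
    apply le_of_forall_pos_le_add
    intro δ hδ
    obtain ⟨N0, hN0⟩ := exists_nat_one_div_lt (show (0:ℝ) < δ/2 by linarith)
    obtain ⟨O, hOo, hOm, hOp⟩ := res_point hDr hmemD3 (show (0:ℝ) < δ/2 by linarith)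
    obtain ⟨n, hn, hnO⟩ := hfreq _ (hOo.mem_nhds hOm) (N0 + 1)
    have h4 := hOp _ (hmemD1 n) hnO
    have h2 := hf2 n
    have h1 := (hc n).1
    have h5 := honediv N0 n (δ/2) hN0 hn
    have habs1 : |f (z n) - f p| ≤ |f (z n) - f (y n)| + |f (y n) - f p| := abs_sub_le _ _ _
    have habs2 : |f (y n) - f p| ≤ |f (y n) - f ys| + |f ys - f p| := abs_sub_le _ _ _
    have habs3 : |f (z n) - f (y n)| = |f (y n) - f (z n)| := abs_sub_comm _ _
    have habs4 : |f (y n) - f ys| = |f ys - f (y n)| := abs_sub_comm _ _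
    have h6 : |f ys - f (y n)| < δ/2 := by
      have := h4
      rwa [abs_sub_comm] at this
    linarith
  rw [hfys, sub_self, abs_zero] at hα
  linarith

end FunctionalTightnessAux

/-- The functional tightness of a space: the least infinite cardinal κ such that
every κ-continuous real-valued function is continuous. -/
noncomputable def functionalTightness (X : Type u) [TopologicalSpace X] : Cardinal.{u} :=
  sInf {κ : Cardinal.{u} | Cardinal.aleph0 ≤ κ ∧
    ∀ f : X → ℝ,
      (∀ A : Set X, #A ≤ κ → Continuous (A.restrict f)) → Continuous f}

/-- For any compact Hausdorff space X, t₀(X) = t₀(X^𝔠), where 𝔠 = 2^ℵ₀. -/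
theorem functionalTightness_continuum_power
    {X : Type u} [TopologicalSpace X] [CompactSpace X] [T2Space X]
    {ι : Type u} (hι : #ι = 2 ^ Cardinal.aleph0) :
    functionalTightness X = functionalTightness (ι → X) := by
  have hcard : #(ULift.{u} (ℕ → Bool)) = 2 ^ Cardinal.aleph0 := by
    rw [Cardinal.mk_uLift]
    rw [← Cardinal.power_def, Cardinal.mk_bool, Cardinal.mk_nat]
    rw [Cardinal.lift_power, Cardinal.lift_two, Cardinal.lift_aleph0]
  have hne : Nonempty ι := by
    rw [← Cardinal.mk_ne_zero_iff, hι]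
    exact Cardinal.power_ne_zero _ two_ne_zero
  obtain ⟨i0⟩ := hne
  have hle : #ι ≤ #(ULift.{u} (ℕ → Bool)) := by rw [hι, hcard]
  obtain ⟨emb⟩ := (Cardinal.le_def _ _).mp hle
  set e : ι → (ℕ → Bool) := fun i => (emb i).down with hedef
  have he : Function.Injective e := fun a b h => emb.injective (ULift.down_injective h)
  unfold functionalTightness
  congr 1
  ext κ
  simp only [Set.mem_setOf_eq]
  constructor
  · rintro ⟨hκ, hX⟩
    exact ⟨hκ, fun f hf => main_power e he hκ hX f hf⟩
  · rintro ⟨hκ, hP⟩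
    refine ⟨hκ, fun f hf => ?_⟩
    have h1 : Continuous fun w : ι → X => f (w i0) := hP _ (kc_comp hf (continuous_apply i0))
    have h2 : Continuous fun x : X => (fun _ : ι => x) := continuous_pi fun _ => continuous_id
    exact h1.comp h2
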